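/- Let G be a finite abelian group of odd order and F a field. Suppose g ∈ Hom_{Ω_F}(ℤ[G(-1)], (F^c)^×) and let f = Θ*^t(g) = g ∘ Θ* ∈ Hom(A_Ĝ, (F^c)^×), viewed as an element r_G(a)·G of (F^c[G])^×/G. Then any lift x ∈ (F^c[G])^× of f satisfies x · x^{[-1]} = 1, where [-1] is the involution induced by inversion on G. -/

import Mathlib

/-- The involution of `C[G]` induced by `s ↦ s⁻¹` on `G`. -/
noncomputable def groupAlgebraInv {G : Type*} [Group G] {C : Type*} [Field C]
    (x : MonoidAlgebra C G) : MonoidAlgebra C G :=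
  MonoidAlgebra.ofCoeff (Finsupp.mapDomain (fun s : G => s⁻¹) x.coeff)

private lemma stmt11_aux_pow {M : Type*} [DivisionMonoid M] (v : M) (a b : Prop)
    [Decidable a] [Decidable b] :
    v ^ ((if a then (1:ℤ) else 0) + (if b then (1:ℤ) else 0)) =
      (if a then v else 1) * (if b then v else 1) := by
  split_ifs <;> norm_num [zpow_two, pow_two]

private lemma stmt11_aux_mul (u : ℤ) (a b : Prop) [Decidable a] [Decidable b] :
    (((if a then (1:ℤ) else 0) + (if b then (1:ℤ) else 0) : ℤ) : ℚ) * (u : ℚ) =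
      (if a then (u:ℚ) else 0) + (if b then (u:ℚ) else 0) := by
  split_ifs <;> push_cast <;> ring

/-- Let `G` be a finite abelian group of odd order and `C` an algebraically
closed field of characteristic `0`.  Suppose `g : G → Cˣ` (an element of
`Hom(ℤ[G(-1)], Cˣ)`) and let `x ∈ (C[G])ˣ` be any lift of the transposed Stickelberger value
`Θ*ᵗ(g) = g ∘ Θ* ∈ Hom(A_Ĝ, Cˣ)`; concretely, for every `ψ ∈ A_Ĝ` (i.e. `Π χ^{ψ(χ)} = 1`)
with Stickelberger coefficients `m s = ⟨ψ, s⟩_* ∈ ℤ`, the character evaluations of `x` satisfy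
`Π_χ x(χ)^{ψ(χ)} = Π_s g(s)^{m s}`.  Then `x · x^{[-1]} = 1`, where `[-1]` is induced by
inversion on `G`. -/
theorem stmt11 (G : Type*) [CommGroup G] [Fintype G]
    (hodd : Odd (Fintype.card G))
    (C : Type*) [Field C] [IsAlgClosed C] [CharZero C] [Fintype (G →* Cˣ)]
    (ζ : ℕ → Cˣ) (hζ : ∀ n : ℕ, 0 < n → IsPrimitiveRoot (ζ n) n)
    (υ : (G →* Cˣ) → G → ℤ)
    (hυ1 : ∀ (χ : G →* Cˣ) (s : G),
      (1 - (orderOf s : ℤ)) ≤ 2 * υ χ s ∧ 2 * υ χ s ≤ (orderOf s : ℤ) - 1)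
    (hυ2 : ∀ (χ : G →* Cˣ) (s : G), χ s = ζ (orderOf s) ^ (υ χ s))
    (g : G → Cˣ) (x : (MonoidAlgebra C G)ˣ)
    (hlift : ∀ ψ : (G →* Cˣ) → ℤ,
      (∀ s : G, ∏ χ : G →* Cˣ, (χ s) ^ (ψ χ) = 1) →
      ∀ m : G → ℤ,
        (∀ s : G, (m s : ℚ) * (orderOf s : ℚ) = ∑ χ : G →* Cˣ, (ψ χ : ℚ) * (υ χ s : ℚ)) →
        ∏ χ : G →* Cˣ, (∑ s : G, (x : MonoidAlgebra C G).coeff s * (χ s : C)) ^ (ψ χ) =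
          ∏ s : G, ((g s : Cˣ) : C) ^ (m s)) :
    (x : MonoidAlgebra C G) * groupAlgebraInv (x : MonoidAlgebra C G) = 1 := by
  classical
  -- the evaluation algebra homomorphisms
  set E : (G →* Cˣ) → (MonoidAlgebra C G →ₐ[C] C) :=
    fun χ => MonoidAlgebra.lift C C G ((Units.coeHom C).comp χ) with hEdef
  have hE : ∀ (χ : G →* Cˣ) (y : MonoidAlgebra C G),
      E χ y = ∑ s : G, y.coeff s * (χ s : C) := by
    intro χ y
    rw [hEdef, MonoidAlgebra.lift_apply, Finsupp.sum_fintype]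
    · simp [smul_eq_mul]
    · intro a; simp
  have hinvco : ∀ (y : MonoidAlgebra C G) (s : G), (groupAlgebraInv y).coeff s = y.coeff s⁻¹ := by
    intro y s
    show Finsupp.mapDomain (fun s : G => s⁻¹) y.coeff s = _
    conv_lhs => rw [← inv_inv s]
    exact Finsupp.mapDomain_apply inv_injective y.coeff s⁻¹
  have hEinv : ∀ (χ : G →* Cˣ) (y : MonoidAlgebra C G),
      E χ (groupAlgebraInv y) = E χ⁻¹ y := by
    intro χ y
    calc E χ (groupAlgebraInv y) = ∑ s : G, y.coeff s⁻¹ * (χ s : C) := by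
          rw [hE]; exact Finset.sum_congr rfl fun s _ => by rw [hinvco]
      _ = ∑ s : G, y.coeff s * ((χ⁻¹ : G →* Cˣ) s : C) := by
          refine Fintype.sum_equiv (Equiv.inv G) _ _ fun s => ?_
          simp [MonoidHom.inv_apply]
      _ = E χ⁻¹ y := (hE _ _).symm
  -- the exponents of inverse characters are opposite
  have hneg : ∀ (χ : G →* Cˣ) (s : G), υ χ⁻¹ s + υ χ s = 0 := by
    intro χ s
    have hn : 0 < orderOf s := orderOf_pos s
    have hz := hζ _ hn
    have h1 : ζ (orderOf s) ^ (υ χ⁻¹ s + υ χ s) = 1 := by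
      rw [zpow_add, ← hυ2, ← hυ2, MonoidHom.inv_apply]
      exact inv_mul_cancel _
    have hdvd : ((orderOf s : ℕ) : ℤ) ∣ (υ χ⁻¹ s + υ χ s) :=
      (hz.zpow_eq_one_iff_dvd _).mp h1
    obtain ⟨b11, b12⟩ := hυ1 χ s
    obtain ⟨b21, b22⟩ := hυ1 χ⁻¹ s
    refine Int.eq_zero_of_abs_lt_dvd hdvd ?_
    rw [abs_lt]; omega
  -- key identity on character evaluations of x
  have key : ∀ χ₀ : G →* Cˣ,
      (∑ s : G, (x : MonoidAlgebra C G).coeff s * (χ₀ s : C)) *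
        (∑ s : G, (x : MonoidAlgebra C G).coeff s * ((χ₀⁻¹ : G →* Cˣ) s : C)) = 1 := by
    intro χ₀
    have h := hlift (fun χ => (if χ = χ₀ then (1:ℤ) else 0) + (if χ = χ₀⁻¹ then (1:ℤ) else 0))
      (by
        intro s
        have : ∀ χ : G →* Cˣ,
            (χ s) ^ ((if χ = χ₀ then (1:ℤ) else 0) + (if χ = χ₀⁻¹ then (1:ℤ) else 0)) =
              (if χ = χ₀ then χ s else 1) * (if χ = χ₀⁻¹ then χ s else 1) :=
          fun χ => stmt11_aux_pow (χ s) _ _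
        rw [Finset.prod_congr rfl fun χ _ => this χ, Finset.prod_mul_distrib,
          Finset.prod_ite_eq' Finset.univ χ₀ (fun χ : G →* Cˣ => χ s),
          Finset.prod_ite_eq' Finset.univ χ₀⁻¹ (fun χ : G →* Cˣ => χ s)]
        simp [MonoidHom.inv_apply])
      (fun _ => 0)
      (by
        intro s
        have : ∀ χ : G →* Cˣ,
            ((((if χ = χ₀ then (1:ℤ) else 0) + (if χ = χ₀⁻¹ then (1:ℤ) else 0) : ℤ)) : ℚ)
                * (υ χ s : ℚ) =
              (if χ = χ₀ then (υ χ s : ℚ) else 0) + (if χ = χ₀⁻¹ then (υ χ s : ℚ) else 0) :=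
          fun χ => stmt11_aux_mul (υ χ s) _ _
        rw [Finset.sum_congr rfl fun χ _ => this χ, Finset.sum_add_distrib,
          Finset.sum_ite_eq' Finset.univ χ₀ (fun χ : G →* Cˣ => (υ χ s : ℚ)),
          Finset.sum_ite_eq' Finset.univ χ₀⁻¹ (fun χ : G →* Cˣ => (υ χ s : ℚ))]
        have hq : (υ χ₀⁻¹ s : ℚ) + (υ χ₀ s : ℚ) = 0 := by exact_mod_cast hneg χ₀ s
        simp only [Finset.mem_univ, if_true, Int.cast_zero, zero_mul]
        linarith)
    simp only [zpow_zero, Finset.prod_const_one] at h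
    rw [← h]
    have : ∀ χ : G →* Cˣ,
        (∑ s : G, (x : MonoidAlgebra C G).coeff s * (χ s : C)) ^
            ((if χ = χ₀ then (1:ℤ) else 0) + (if χ = χ₀⁻¹ then (1:ℤ) else 0)) =
          (if χ = χ₀ then (∑ s : G, (x : MonoidAlgebra C G).coeff s * (χ s : C)) else 1) *
            (if χ = χ₀⁻¹ then (∑ s : G, (x : MonoidAlgebra C G).coeff s * (χ s : C)) else 1) :=
      fun χ => stmt11_aux_pow _ _ _
    rw [Finset.prod_congr rfl fun χ _ => this χ, Finset.prod_mul_distrib,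
      Finset.prod_ite_eq' Finset.univ χ₀
        (fun χ : G →* Cˣ => ∑ s : G, (x : MonoidAlgebra C G).coeff s * (χ s : C)),
      Finset.prod_ite_eq' Finset.univ χ₀⁻¹
        (fun χ : G →* Cˣ => ∑ s : G, (x : MonoidAlgebra C G).coeff s * (χ s : C))]
    simp
  -- orthogonality: the sum of all character values at a nontrivial element vanishes
  have hexp : NeZero ((Monoid.exponent G : C)) :=
    ⟨Nat.cast_ne_zero.mpr Monoid.exponent_ne_zero_of_finite⟩
  have horth : ∀ u : G, u ≠ 1 → ∑ χ : G →* Cˣ, ((χ u : Cˣ) : C) = 0 := by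
    intro u hu
    obtain ⟨χ₁, h1⟩ := CommGroup.exists_apply_ne_one_of_hasEnoughRootsOfUnity G C hu
    have hsum : ∑ χ : G →* Cˣ, (((χ₁ * χ) u : Cˣ) : C) = ∑ χ : G →* Cˣ, ((χ u : Cˣ) : C) :=
      Fintype.sum_equiv (Equiv.mulLeft χ₁) _ _ fun χ => rfl
    have hfac : ((χ₁ u : Cˣ) : C) * ∑ χ : G →* Cˣ, ((χ u : Cˣ) : C)
        = ∑ χ : G →* Cˣ, ((χ u : Cˣ) : C) := by
      calc ((χ₁ u : Cˣ) : C) * ∑ χ : G →* Cˣ, ((χ u : Cˣ) : C)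
          = ∑ χ : G →* Cˣ, (((χ₁ * χ) u : Cˣ) : C) := by
            rw [Finset.mul_sum]
            exact Finset.sum_congr rfl fun χ _ => by rw [MonoidHom.mul_apply, Units.val_mul]
        _ = _ := hsum
    have hne : ((χ₁ u : Cˣ) : C) ≠ 1 := fun hc => h1 (Units.ext hc)
    have : (((χ₁ u : Cˣ) : C) - 1) * ∑ χ : G →* Cˣ, ((χ u : Cˣ) : C) = 0 := by
      rw [sub_mul, one_mul, hfac, sub_self]
    rcases mul_eq_zero.mp this with h | h
    · exact absurd (by linear_combination h) hne
    · exact h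
  -- joint injectivity of the evaluation maps
  have hinj : ∀ y : MonoidAlgebra C G, (∀ χ : G →* Cˣ, E χ y = 0) → y = 0 := by
    intro y hy
    ext t
    have h0 : ∑ χ : G →* Cˣ, ((χ t : C))⁻¹ * E χ y = 0 := by simp [hy]
    have h1 : ∑ χ : G →* Cˣ, ((χ t : C))⁻¹ * E χ y
        = ∑ s : G, y.coeff s * ∑ χ : G →* Cˣ, ((χ (s * t⁻¹) : Cˣ) : C) := by
      simp_rw [hE, Finset.mul_sum]
      rw [Finset.sum_comm]
      refine Finset.sum_congr rfl fun s _ => ?_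
      refine Finset.sum_congr rfl fun χ _ => ?_
      rw [map_mul, map_inv, Units.val_mul, Units.val_inv_eq_inv_val]
      ring
    have h2 : ∀ s : G, (∑ χ : G →* Cˣ, ((χ (s * t⁻¹) : Cˣ) : C))
        = if s = t then ((Fintype.card (G →* Cˣ) : ℕ) : C) else 0 := by
      intro s
      by_cases hst : s = t
      · subst hst; simp
      · rw [if_neg hst]
        exact horth _ (by simpa [mul_inv_eq_one] using hst)
    rw [h1, Finset.sum_congr rfl fun s _ => by rw [h2 s]] at h0
    simp only [mul_ite, mul_zero] at h0
    rw [Finset.sum_ite_eq' Finset.univ t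
      (fun s => y.coeff s * ((Fintype.card (G →* Cˣ) : ℕ) : C)), if_pos (Finset.mem_univ t)] at h0
    have hcard : ((Fintype.card (G →* Cˣ) : ℕ) : C) ≠ 0 :=
      Nat.cast_ne_zero.mpr Fintype.card_ne_zero
    simpa [hcard] using h0
  -- conclude
  have hval : ∀ χ : G →* Cˣ,
      E χ ((x : MonoidAlgebra C G) * groupAlgebraInv (x : MonoidAlgebra C G)) = 1 := by
    intro χ
    rw [map_mul, hEinv, hE, hE]
    exact key χ
  have hz : (x : MonoidAlgebra C G) * groupAlgebraInv (x : MonoidAlgebra C G) - 1 = 0 :=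
    hinj _ fun χ => by rw [map_sub, map_one, hval, sub_self]
  linear_combination hz
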